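/- Fix λ > 0, ξ > 0, δ ∈ (0,1), and M ∈ (0,∞). For s > 0 and μ ∈ 𝒢(δ, M) define κ₃(s; μ) = ξ (1 − ρ) · ( s φ′(0) / φ(s)² − s² φ′(s) φ′(0) / φ(s)³ + s φ′(0) λ m₂ / (2 φ(s) (1 − ρ)²) ). Then there exists a constant 0 < K₃ < ∞ such that |κ₃(s; μ)| ≤ K₃ for every μ ∈ 𝒢(δ, M) and every s > 0. -/

import Mathlib

open MeasureTheory

/-- The characteristic function of a measure `μ` on `ℝ`. -/
noncomputable def charFn (μ : Measure ℝ) (s : ℝ) : ℂ :=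
  ∫ x, Complex.exp (Complex.I * s * x) ∂μ

/-- The characteristic exponent `φ(s) = λ(γ(s) − 1) − i s` of the net input process. -/
noncomputable def phi (lam : ℝ) (μ : Measure ℝ) (s : ℝ) : ℂ :=
  lam * (charFn μ s - 1) - Complex.I * s

/-- The derivative of the characteristic exponent: `φ′(s) = λ ∫ i x exp(i s x) dμ(x) − i`. -/
noncomputable def phiDeriv (lam : ℝ) (μ : Measure ℝ) (s : ℝ) : ℂ :=
  lam * ∫ x, Complex.I * x * Complex.exp (Complex.I * s * x) ∂μ - Complex.I

/-- The `k`-th moment of a measure on `ℝ`. -/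
noncomputable def moment (μ : Measure ℝ) (k : ℕ) : ℝ :=
  ∫ x, x ^ k ∂μ

/-- The quantity `κ₃(s; μ)` of Lemma 3.8:
`κ₃ = ξ(1−ρ)( sφ′(0)/φ(s)² − s²φ′(s)φ′(0)/φ(s)³ + sφ′(0)λm₂/(2φ(s)(1−ρ)²) )`. -/
noncomputable def kappa3 (lam ξ : ℝ) (μ : Measure ℝ) (s : ℝ) : ℂ :=
  (ξ : ℂ) * ((1 : ℂ) - lam * moment μ 1) *
    ((s : ℂ) * phiDeriv lam μ 0 / (phi lam μ s) ^ 2 -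
      (s : ℂ) ^ 2 * phiDeriv lam μ s * phiDeriv lam μ 0 / (phi lam μ s) ^ 3 +
      (s : ℂ) * phiDeriv lam μ 0 * lam * moment μ 2 /
        (2 * phi lam μ s * ((1 : ℂ) - lam * moment μ 1) ^ 2))

/-- Pointwise Taylor bound: `‖e^{it} − 1 − i t e^{it}‖ ≤ t²/2` for `t ≥ 0`. -/
lemma expAux (t : ℝ) (ht : 0 ≤ t) :
    ‖Complex.exp (t * Complex.I) - 1 - t * Complex.I * Complex.exp (t * Complex.I)‖
      ≤ t ^ 2 / 2 := by
  have key : ∀ u : ℝ, HasDerivAt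
      (fun v : ℝ => Complex.exp (v * Complex.I) - 1 - v * Complex.I * Complex.exp (v * Complex.I))
      ((u : ℂ) * Complex.exp (u * Complex.I)) u := by
    intro u
    have h1 : HasDerivAt (fun v : ℝ => Complex.exp (v * Complex.I))
        (Complex.I * Complex.exp (u * Complex.I)) u := by
      have := ((Complex.hasDerivAt_exp (u * Complex.I)).comp u
        ((Complex.ofRealCLM.hasDerivAt (x := u)).mul_const Complex.I))
      simpa [mul_comm, Function.comp_def] using this
    have h2 : HasDerivAt (fun v : ℝ => (v : ℂ) * Complex.I * Complex.exp (v * Complex.I))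
        (Complex.I * Complex.exp (u * Complex.I) +
          (u : ℂ) * Complex.I * (Complex.I * Complex.exp (u * Complex.I))) u := by
      have hlin : HasDerivAt (fun v : ℝ => (v : ℂ) * Complex.I) Complex.I u := by
        simpa using (Complex.ofRealCLM.hasDerivAt (x := u)).mul_const Complex.I
      exact hlin.mul h1
    have := (h1.sub_const 1).sub h2
    refine this.congr_deriv ?_
    have hI : Complex.I * Complex.I = -1 := Complex.I_mul_I
    linear_combination (-((u:ℂ) * Complex.exp (u * Complex.I))) * hI
  have hint : (∫ u in (0:ℝ)..t, (u : ℂ) * Complex.exp (u * Complex.I)) =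
      (Complex.exp (t * Complex.I) - 1 - t * Complex.I * Complex.exp (t * Complex.I)) - 0 := by
    have := intervalIntegral.integral_eq_sub_of_hasDerivAt (a := 0) (b := t)
      (f := fun v : ℝ => Complex.exp (v * Complex.I) - 1 - v * Complex.I * Complex.exp (v * Complex.I))
      (fun u _ => key u) ?_
    · simpa using this
    · apply Continuous.intervalIntegrable
      continuity
  have hb : ‖(∫ u in (0:ℝ)..t, (u : ℂ) * Complex.exp (u * Complex.I))‖ ≤ t ^ 2 / 2 := by
    have h1 : ‖(∫ u in (0:ℝ)..t, (u : ℂ) * Complex.exp (u * Complex.I))‖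
        ≤ ∫ u in (0:ℝ)..t, ‖(u : ℂ) * Complex.exp (u * Complex.I)‖ := by
      exact intervalIntegral.norm_integral_le_integral_norm ht
    refine h1.trans ?_
    have heq : ∀ u ∈ Set.uIcc (0:ℝ) t, ‖(u : ℂ) * Complex.exp (u * Complex.I)‖ = |u| := by
      intro u _
      simp [Complex.norm_exp]
    rw [intervalIntegral.integral_congr heq]
    have heq2 : (∫ u in (0:ℝ)..t, |u|) = ∫ u in (0:ℝ)..t, u := by
      apply intervalIntegral.integral_congr
      intro u hu
      rw [Set.uIcc_of_le ht] at hu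
      exact abs_of_nonneg hu.1
    rw [heq2, integral_id]
    nlinarith
  calc ‖Complex.exp (t * Complex.I) - 1 - t * Complex.I * Complex.exp (t * Complex.I)‖
      = ‖(∫ u in (0:ℝ)..t, (u : ℂ) * Complex.exp (u * Complex.I))‖ := by
        rw [hint]; simp
    _ ≤ t ^ 2 / 2 := hb

lemma integrable_cexp (μ : Measure ℝ) [IsProbabilityMeasure μ] (s : ℝ) :
    Integrable (fun x : ℝ => Complex.exp (Complex.I * s * x)) μ := by
  refine (integrable_const (1 : ℝ)).mono' ?_ ?_
  · exact (Complex.continuous_exp.comp (by continuity)).aestronglyMeasurable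
  · filter_upwards with x
    simp [Complex.norm_exp]

lemma integrable_xexp (μ : Measure ℝ) (h1 : Integrable (fun x : ℝ => x) μ) (s : ℝ) :
    Integrable (fun x : ℝ => Complex.I * x * Complex.exp (Complex.I * s * x)) μ := by
  refine h1.abs.mono' ?_ ?_
  · apply Continuous.aestronglyMeasurable
    exact (continuous_const.mul Complex.continuous_ofReal).mul
      (Complex.continuous_exp.comp (by continuity))
  · filter_upwards with x
    simp [Complex.norm_exp, abs_of_nonneg]

lemma integral_im' (μ : Measure ℝ) {f : ℝ → ℂ} (hf : Integrable f μ) :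
    ∫ x, (f x).im ∂μ = (∫ x, f x ∂μ).im := by
  rw [← RCLike.im_eq_complex_im]; exact integral_im hf

lemma integral_coe (μ : Measure ℝ) : ∫ x, (x : ℂ) ∂μ = ((∫ x, x ∂μ : ℝ) : ℂ) :=
  integral_ofReal

set_option maxHeartbeats 1000000 in
/-- For fixed `λ > 0`, `ξ > 0`, `δ ∈ (0,1)` and `M ∈ (0,∞)`, there is `0 < K₃ < ∞` with
`|κ₃(s; μ)| ≤ K₃` for every `μ ∈ 𝒢(δ, M)` and every `s > 0`. -/
theorem kappa3_uniformly_bounded (lam : ℝ) (hlam : 0 < lam) (ξ : ℝ) (hξ : 0 < ξ)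
    (δ : ℝ) (hδ : δ ∈ Set.Ioo (0 : ℝ) 1) (M : ℝ) (hM : 0 < M) :
    ∃ K₃ : ℝ, 0 < K₃ ∧
      ∀ (μ : Measure ℝ), IsProbabilityMeasure μ → μ (Set.Ici 0) = 1 →
        Integrable (fun x => x) μ → Integrable (fun x => x ^ 2) μ →
        Integrable (fun x => x ^ 3) μ →
        lam * moment μ 1 ≤ 1 - δ → moment μ 3 ≤ M →
        ∀ s : ℝ, 0 < s → ‖kappa3 lam ξ μ s‖ ≤ K₃ := by
  obtain ⟨hδ0, hδ1⟩ := hδ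
  refine ⟨ξ * lam * (1 + M) / δ, by positivity, ?_⟩
  intro μ hprob hsupp h1 h2 h3 hρ hm3 s hs
  -- a.e. nonnegativity
  have haesupp : ∀ᵐ x ∂μ, 0 ≤ x := by
    have hc : μ (Set.Ici (0:ℝ))ᶜ = 0 := (prob_compl_eq_zero_iff measurableSet_Ici).2 hsupp
    rw [ae_iff]
    have : {x : ℝ | ¬ 0 ≤ x} = (Set.Ici (0:ℝ))ᶜ := by ext x; simp
    rw [this]; exact hc
  set m1 := moment μ 1 with hm1def
  set m2 := moment μ 2 with hm2def
  have hm1 : 0 ≤ m1 := by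
    refine integral_nonneg_of_ae ?_
    filter_upwards [haesupp] with x hx
    simpa using hx
  have hm2 : 0 ≤ m2 := integral_nonneg fun x => by positivity
  have hm2M : m2 ≤ 1 + M := by
    have hle : m2 ≤ ∫ x, (1 + x ^ 3) ∂μ := by
      refine integral_mono_ae h2 ((integrable_const 1).add h3) ?_
      filter_upwards [haesupp] with x hx
      rcases le_total x 1 with h | h
      · nlinarith
      · nlinarith
    have : (∫ x, (1 + x ^ 3) ∂μ) = 1 + moment μ 3 := by
      rw [integral_add (integrable_const 1) h3]
      simp [moment]
    rw [this] at hle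
    linarith
  set r := 1 - lam * m1 with hrdef
  have hrδ : δ ≤ r := by simp only [hrdef]; linarith
  have hr0 : 0 < r := lt_of_lt_of_le hδ0 hrδ
  have hs0 : (0:ℝ) ≤ s := hs.le
  -- |φ′(0)| = r
  have hD0 : phiDeriv lam μ 0 = Complex.I * ((lam * m1 : ℝ) - 1 : ℝ) := by
    have he : ∀ x : ℝ, Complex.I * x * Complex.exp (Complex.I * (0:ℝ) * x) = Complex.I * x := by
      intro x; simp
    unfold phiDeriv
    rw [show (fun x : ℝ => Complex.I * x * Complex.exp (Complex.I * (0:ℝ) * x))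
        = fun x : ℝ => Complex.I * x from funext he]
    rw [integral_const_mul, integral_coe]
    have : (∫ x, x ∂μ) = m1 := by simp [hm1def, moment]
    rw [this]
    push_cast
    ring
  have habsD0 : ‖phiDeriv lam μ 0‖ = r := by
    rw [hD0]
    rw [norm_mul, Complex.norm_I, one_mul, Complex.norm_real, Real.norm_eq_abs, abs_of_nonpos (by linarith)]
    simp [hrdef]
  -- lower bound on |φ(s)|
  have hφlb : r * s ≤ ‖phi lam μ s‖ := by
    have him : (charFn μ s).im = ∫ x, Real.sin (s * x) ∂μ := by
      have hi := integral_im' μ (integrable_cexp μ s)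
      rw [charFn, ← hi]
      congr 1
      funext x
      have : Complex.I * (s:ℝ) * (x:ℝ) = ((s * x : ℝ) : ℂ) * Complex.I := by push_cast; ring
      rw [this, Complex.exp_ofReal_mul_I_im]
    have hsin : (∫ x, Real.sin (s * x) ∂μ) ≤ s * m1 := by
      have : (∫ x, Real.sin (s * x) ∂μ) ≤ ∫ x, s * x ∂μ := by
        refine integral_mono_ae ?_ (h1.const_mul s) ?_
        · refine (integrable_const (1:ℝ)).mono' ?_ ?_
          · exact (Real.continuous_sin.comp (by continuity)).aestronglyMeasurable
          · filter_upwards with x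
            simp [abs_of_nonneg, Real.abs_sin_le_one]
        · filter_upwards [haesupp] with x hx
          exact Real.sin_le (by positivity)
      rw [integral_const_mul] at this
      simpa [moment, hm1def] using this
    have himφ : (phi lam μ s).im = lam * (charFn μ s).im - s := by
      simp [phi, Complex.sub_im, Complex.mul_im]
    have hle : (phi lam μ s).im ≤ -(r * s) := by
      rw [himφ, him]
      have := mul_le_mul_of_nonneg_left hsin hlam.le
      simp only [hrdef]
      nlinarith
    calc r * s ≤ |(phi lam μ s).im| := by
          rw [abs_of_neg (by nlinarith : (phi lam μ s).im < 0)]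
          linarith
      _ ≤ ‖phi lam μ s‖ := Complex.abs_im_le_norm _
  have ha0 : 0 < ‖phi lam μ s‖ := lt_of_lt_of_le (by positivity) hφlb
  have hφne : phi lam μ s ≠ 0 := by
    intro h
    rw [h] at ha0; simp at ha0
  -- Taylor-type bound on φ(s) − s φ′(s)
  have hie := integrable_cexp μ s
  have hix := integrable_xexp μ h1 s
  have h1c : Integrable (fun _ : ℝ => (1:ℂ)) μ := integrable_const 1
  have hsub1 : Integrable (fun x : ℝ => Complex.exp (Complex.I * s * x) - 1) μ := hie.sub h1c
  have hsub2 : Integrable (fun x : ℝ =>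
      (s:ℂ) * (Complex.I * x * Complex.exp (Complex.I * s * x))) μ := hix.const_mul s
  have heq : phi lam μ s - s * phiDeriv lam μ s =
      (lam : ℂ) * ∫ x, (Complex.exp (Complex.I * s * x) - 1 -
        (s:ℂ) * (Complex.I * x * Complex.exp (Complex.I * s * x))) ∂μ := by
    rw [integral_sub hsub1 hsub2, integral_sub hie h1c, integral_const_mul]
    unfold phi phiDeriv charFn
    have h11 : (∫ _x : ℝ, (1:ℂ) ∂μ) = 1 := by simp
    rw [h11]
    ring
  have htay : ‖phi lam μ s - s * phiDeriv lam μ s‖ ≤ lam * (s ^ 2 * m2 / 2) := by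
    rw [heq, norm_mul, Complex.norm_real, Real.norm_eq_abs, abs_of_pos hlam]
    refine mul_le_mul_of_nonneg_left ?_ hlam.le
    have hb : ∀ᵐ (x : ℝ) ∂μ, ‖Complex.exp (Complex.I * s * x) - 1 -
        (s:ℂ) * (Complex.I * x * Complex.exp (Complex.I * s * x))‖ ≤ s ^ 2 / 2 * x ^ 2 := by
      filter_upwards [haesupp] with x hx
      have ht : (0:ℝ) ≤ s * x := by positivity
      have h1' : Complex.I * (s:ℝ) * (x:ℝ) = ((s * x : ℝ) : ℂ) * Complex.I := by
        push_cast; ring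
      have h2' : Complex.exp (Complex.I * s * x) - 1 -
            (s:ℂ) * (Complex.I * x * Complex.exp (Complex.I * s * x))
          = Complex.exp (((s * x : ℝ) : ℂ) * Complex.I) - 1 -
            ((s * x : ℝ) : ℂ) * Complex.I * Complex.exp (((s * x : ℝ) : ℂ) * Complex.I) := by
        rw [h1']; push_cast; ring
      rw [h2']
      calc ‖Complex.exp (((s * x : ℝ) : ℂ) * Complex.I) - 1 -
            ((s * x : ℝ) : ℂ) * Complex.I * Complex.exp (((s * x : ℝ) : ℂ) * Complex.I)‖
          ≤ (s * x) ^ 2 / 2 := expAux (s * x) ht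
        _ = s ^ 2 / 2 * x ^ 2 := by ring
    calc ‖∫ x, (Complex.exp (Complex.I * s * x) - 1 -
          (s:ℂ) * (Complex.I * x * Complex.exp (Complex.I * s * x))) ∂μ‖
        ≤ ∫ x, s ^ 2 / 2 * x ^ 2 ∂μ := norm_integral_le_of_norm_le (h2.const_mul _) hb
      _ = s ^ 2 * m2 / 2 := by
          rw [integral_const_mul]
          have : (∫ x, x ^ 2 ∂μ) = m2 := by simp [hm2def, moment]
          rw [this]; ring
  -- rewrite κ₃ with the combined first two terms
  have hrne : ((r:ℝ) : ℂ) ≠ 0 := by exact_mod_cast hr0.ne'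
  have hkey : kappa3 lam ξ μ s = (ξ:ℂ) * ((r:ℝ):ℂ) *
      ((s:ℂ) * phiDeriv lam μ 0 * (phi lam μ s - (s:ℂ) * phiDeriv lam μ s) / (phi lam μ s) ^ 3
        + (s:ℂ) * phiDeriv lam μ 0 * (lam:ℂ) * ((m2:ℝ):ℂ) /
            (2 * phi lam μ s * ((r:ℝ):ℂ) ^ 2)) := by
    have hrc : (1:ℂ) - (lam:ℂ) * ((moment μ 1 : ℝ):ℂ) = ((r:ℝ):ℂ) := by
      rw [hrdef, hm1def]; push_cast; ring
    unfold kappa3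
    rw [hrc, ← hm2def]
    field_simp
  have hA : ‖(s:ℂ) * phiDeriv lam μ 0 *
      (phi lam μ s - (s:ℂ) * phiDeriv lam μ s) / (phi lam μ s) ^ 3‖ ≤ lam * m2 / (2 * r ^ 2) := by
    have hAe : ‖(s:ℂ) * phiDeriv lam μ 0 *
        (phi lam μ s - (s:ℂ) * phiDeriv lam μ s) / (phi lam μ s) ^ 3‖
        = s * r * ‖phi lam μ s - (s:ℂ) * phiDeriv lam μ s‖
          / ‖phi lam μ s‖ ^ 3 := by
      simp only [norm_div, norm_mul, norm_pow, Complex.norm_real, Real.norm_eq_abs, habsD0]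
      rw [abs_of_pos hs]
    rw [hAe]
    calc s * r * ‖phi lam μ s - (s:ℂ) * phiDeriv lam μ s‖
          / ‖phi lam μ s‖ ^ 3
        ≤ s * r * (lam * (s ^ 2 * m2 / 2)) / ((r * s) ^ 3) := by
          apply div_le_div₀ (by positivity) ?_ (by positivity) ?_
          · exact mul_le_mul_of_nonneg_left htay (by positivity)
          · exact pow_le_pow_left₀ (by positivity) hφlb 3
      _ = lam * m2 / (2 * r ^ 2) := by
          rw [div_eq_div_iff (by positivity) (by positivity)]
          ring
  have hB : ‖(s:ℂ) * phiDeriv lam μ 0 * (lam:ℂ) * ((m2:ℝ):ℂ) /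
      (2 * phi lam μ s * ((r:ℝ):ℂ) ^ 2)‖ ≤ lam * m2 / (2 * r ^ 2) := by
    have hBe : ‖(s:ℂ) * phiDeriv lam μ 0 * (lam:ℂ) * ((m2:ℝ):ℂ) /
        (2 * phi lam μ s * ((r:ℝ):ℂ) ^ 2)‖
        = s * r * lam * m2 / (2 * ‖phi lam μ s‖ * r ^ 2) := by
      simp only [norm_div, norm_mul, norm_pow, Complex.norm_real, Real.norm_eq_abs, Complex.norm_two, habsD0]
      rw [abs_of_pos hs, abs_of_pos hlam, abs_of_nonneg hm2, abs_of_pos hr0]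
    rw [hBe]
    calc s * r * lam * m2 / (2 * ‖phi lam μ s‖ * r ^ 2)
        ≤ s * r * lam * m2 / (2 * (r * s) * r ^ 2) := by
          apply div_le_div₀ (by positivity) le_rfl (by positivity) ?_
          nlinarith [hφlb, sq_nonneg r]
      _ = lam * m2 / (2 * r ^ 2) := by
          rw [div_eq_div_iff (by positivity) (by positivity)]
          ring
  have hsum : ‖kappa3 lam ξ μ s‖ ≤ ξ * r * (lam * m2 / (2 * r ^ 2) + lam * m2 / (2 * r ^ 2)) := by
    rw [hkey, norm_mul, norm_mul, Complex.norm_real, Complex.norm_real, Real.norm_eq_abs,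
      Real.norm_eq_abs, abs_of_pos hξ, abs_of_pos hr0]
    exact mul_le_mul_of_nonneg_left
      ((norm_add_le _ _).trans (add_le_add hA hB)) (by positivity)
  have hfin : ξ * r * (lam * m2 / (2 * r ^ 2) + lam * m2 / (2 * r ^ 2)) = ξ * lam * m2 / r := by
    rw [← add_div, ← mul_div_assoc, div_eq_div_iff (by positivity) (by positivity)]
    ring
  rw [hfin] at hsum
  refine hsum.trans ?_
  apply div_le_div₀ (by positivity) ?_ hδ0 hrδ
  exact mul_le_mul_of_nonneg_left hm2M (by positivity)
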